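/- arXiv:1806.10284 — 5 statements merged into one kernel-verified Lean document; each statement's English description precedes it below -/
import Mathlib

section
/- Let n₁, n₂ ≥ 1 be integers, m₁ an integer with 0 ≤ m₁ ≤ n₁, ρ₁ ∈ {0,1}, δx, δy > 0, κ ∈ ℝ³, a₁ = (n₁δx, 0, 0), and a₂ = ((m₁ − ρ₁n₁)δx, n₂δy, 0). Suppose f : ℝ³ → ℂ is quasi-periodic with Bloch vector κ along a₁ and along a₂. Then for every integer i with 0 ≤ i < n₁ and all c, z ∈ ℝ: if i < m₁ then f(iδx + c, n₂δy, z) = exp(2πι κ·(a₂ + ρ₁a₁ − a₁)) · f((i + n₁ − m₁)δx + c, 0, z), and if m₁ ≤ i then f(iδx + c, n₂δy, z) = exp(2πι κ·(a₂ + ρ₁a₁)) · f((i − m₁)δx + c, 0, z). (Theorem 3.2: periodicity of the field components along a₁ and a₂, encoded by the matrix J₂.) -/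
open Real

/-- The Euclidean dot product on `ℝ³` (as a triple of reals). -/
def dot3 (u v : ℝ × ℝ × ℝ) : ℝ := u.1 * v.1 + u.2.1 * v.2.1 + u.2.2 * v.2.2

/-- `f : ℝ³ → ℂ` is quasi-periodic with Bloch vector `κ` along `a`:
`f (x + a) = exp (2πι κ·a) * f x` for all `x ∈ ℝ³`. -/
def QuasiPeriodic (f : ℝ × ℝ × ℝ → ℂ) (κ a : ℝ × ℝ × ℝ) : Prop :=
  ∀ x : ℝ × ℝ × ℝ,
    f (x.1 + a.1, x.2.1 + a.2.1, x.2.2 + a.2.2)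
      = Complex.exp (2 * (π : ℂ) * Complex.I * (dot3 κ a : ℝ)) * f x

/-- Theorem 3.2: periodicity of field components along `a₁` and `a₂`. -/
theorem stmt_1 (n₁ n₂ : ℕ) (hn₁ : 1 ≤ n₁) (hn₂ : 1 ≤ n₂)
    (m₁ : ℕ) (hm₁ : m₁ ≤ n₁) (ρ₁ : ℕ) (hρ₁ : ρ₁ ≤ 1)
    (δx δy : ℝ) (hδx : 0 < δx) (hδy : 0 < δy) (κ : ℝ × ℝ × ℝ)
    (a₁ a₂ : ℝ × ℝ × ℝ)
    (ha₁ : a₁ = ((n₁ : ℝ) * δx, 0, 0))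
    (ha₂ : a₂ = (((m₁ : ℝ) - (ρ₁ : ℝ) * n₁) * δx, (n₂ : ℝ) * δy, 0))
    (f : ℝ × ℝ × ℝ → ℂ)
    (hf₁ : QuasiPeriodic f κ a₁) (hf₂ : QuasiPeriodic f κ a₂) :
    ∀ i : ℕ, i < n₁ → ∀ c z : ℝ,
      (i < m₁ →
        f ((i : ℝ) * δx + c, (n₂ : ℝ) * δy, z)
          = Complex.exp (2 * (π : ℂ) * Complex.I
                * (dot3 κ (a₂ + (ρ₁ : ℝ) • a₁ - a₁) : ℝ))
              * f (((i : ℝ) + n₁ - m₁) * δx + c, 0, z)) ∧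
      (m₁ ≤ i →
        f ((i : ℝ) * δx + c, (n₂ : ℝ) * δy, z)
          = Complex.exp (2 * (π : ℂ) * Complex.I
                * (dot3 κ (a₂ + (ρ₁ : ℝ) • a₁) : ℝ))
              * f (((i : ℝ) - m₁) * δx + c, 0, z)) := by
  intro i hi c z
  -- components of a₁ and a₂
  have c21 : a₂.1 = ((m₁ : ℝ) - (ρ₁ : ℝ) * n₁) * δx := by rw [ha₂]
  have c22 : a₂.2.1 = (n₂ : ℝ) * δy := by rw [ha₂]
  have c23 : a₂.2.2 = 0 := by rw [ha₂]
  have c11 : a₁.1 = (n₁ : ℝ) * δx := by rw [ha₁]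
  have c12 : a₁.2.1 = 0 := by rw [ha₁]
  have c13 : a₁.2.2 = 0 := by rw [ha₁]
  -- cleaned-up quasi-periodicity along a₂ and a₁
  have H2 : ∀ u : ℝ,
      f (u + ((m₁ : ℝ) - (ρ₁ : ℝ) * n₁) * δx, (n₂ : ℝ) * δy, z)
        = Complex.exp (2 * (π : ℂ) * Complex.I * (dot3 κ a₂ : ℝ)) * f (u, 0, z) := by
    intro u
    have h := hf₂ (u, 0, z)
    dsimp only at h
    rw [c21, c22, c23, zero_add, add_zero] at h
    exact h
  have H1 : ∀ u : ℝ,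
      f (u + (n₁ : ℝ) * δx, 0, z)
        = Complex.exp (2 * (π : ℂ) * Complex.I * (dot3 κ a₁ : ℝ)) * f (u, 0, z) := by
    intro u
    have h := hf₁ (u, 0, z)
    dsimp only at h
    rw [c11, c12, c13, zero_add, add_zero] at h
    exact h
  constructor
  · -- i < m₁
    intro him
    have hdL : dot3 κ (a₂ + (ρ₁ : ℝ) • a₁ - a₁)
        = dot3 κ a₂ - dot3 κ a₁ + (ρ₁ : ℝ) * dot3 κ a₁ := by
      simp only [dot3, Prod.fst_add, Prod.snd_add, Prod.fst_sub, Prod.snd_sub,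
        Prod.smul_fst, Prod.smul_snd, smul_eq_mul]
      ring
    rw [hdL]
    interval_cases ρ₁
    · -- ρ₁ = 0
      have h2 := H2 (((i : ℝ) - m₁) * δx + c)
      have h1 := H1 (((i : ℝ) - m₁) * δx + c)
      rw [show (((i : ℝ) - m₁) * δx + c + ((m₁ : ℝ) - ((0 : ℕ) : ℝ) * n₁) * δx)
            = (i : ℝ) * δx + c from by push_cast; ring] at h2
      rw [show (((i : ℝ) - m₁) * δx + c + (n₁ : ℝ) * δx)
            = ((i : ℝ) + n₁ - m₁) * δx + c from by ring] at h1
      rw [h2, h1, ← mul_assoc, ← Complex.exp_add]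
      congr 1
      push_cast
      ring
    · -- ρ₁ = 1
      have h2 := H2 (((i : ℝ) + n₁ - m₁) * δx + c)
      rw [show (((i : ℝ) + n₁ - m₁) * δx + c + ((m₁ : ℝ) - ((1 : ℕ) : ℝ) * n₁) * δx)
            = (i : ℝ) * δx + c from by push_cast; ring] at h2
      rw [show (dot3 κ a₂ - dot3 κ a₁ + (((1 : ℕ) : ℝ)) * dot3 κ a₁) = dot3 κ a₂
            from by push_cast; ring]
      exact h2
  · -- m₁ ≤ i
    intro him
    have hdL : dot3 κ (a₂ + (ρ₁ : ℝ) • a₁) = dot3 κ a₂ + (ρ₁ : ℝ) * dot3 κ a₁ := by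
      simp only [dot3, Prod.fst_add, Prod.snd_add, Prod.smul_fst, Prod.smul_snd, smul_eq_mul]
      ring
    rw [hdL]
    interval_cases ρ₁
    · -- ρ₁ = 0
      have h2 := H2 (((i : ℝ) - m₁) * δx + c)
      rw [show (((i : ℝ) - m₁) * δx + c + ((m₁ : ℝ) - ((0 : ℕ) : ℝ) * n₁) * δx)
            = (i : ℝ) * δx + c from by push_cast; ring] at h2
      rw [show (dot3 κ a₂ + (((0 : ℕ) : ℝ)) * dot3 κ a₁) = dot3 κ a₂
            from by push_cast; ring]
      exact h2
    · -- ρ₁ = 1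
      have h2 := H2 (((i : ℝ) - m₁ + n₁) * δx + c)
      have h1 := H1 (((i : ℝ) - m₁) * δx + c)
      rw [show (((i : ℝ) - m₁ + n₁) * δx + c + ((m₁ : ℝ) - ((1 : ℕ) : ℝ) * n₁) * δx)
            = (i : ℝ) * δx + c from by push_cast; ring] at h2
      rw [show (((i : ℝ) - m₁) * δx + c + (n₁ : ℝ) * δx)
            = ((i : ℝ) - m₁ + n₁) * δx + c from by ring] at h1
      rw [h2, h1, ← mul_assoc, ← Complex.exp_add]
      congr 1
      push_cast
      ring
end

section
/- Let n₁, n₂, n₃ ≥ 1 be integers, integers 0 ≤ m₁ ≤ n₁, 0 ≤ m₂ ≤ n₁, 0 ≤ m₃ ≤ n₂, ρ₁, ρ₂, ρ₃ ∈ {0,1}, δx, δy, δz > 0, κ ∈ ℝ³, a₁ = (n₁δx, 0, 0), a₂ = ((m₁ − ρ₁n₁)δx, n₂δy, 0), a₃ = ((m₂ − ρ₂n₁)δx, (m₃ − ρ₃n₂)δy, n₃δz). Suppose f : ℝ³ → ℂ is quasi-periodic with Bloch vector κ along a₁, a₂ and a₃. Then for all integers i, j with 0 ≤ i < n₁ and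 0 ≤ j < n₂ there exist unique integers p, q, i*, j* with 0 ≤ i* < n₁, 0 ≤ j* < n₂, i = (m₂ − ρ₂n₁) + q(m₁ − ρ₁n₁) + p·n₁ + i* and j = (m₃ − ρ₃n₂) + q·n₂ + j*, and for all c, d, z ∈ ℝ one has f(iδx + c, jδy + d, n₃δz + z) = exp(2πι κ·(a₃ + q·a₂ + p·a₁)) · f(i*δx + c, j*δy + d, z). (Theorem 3.3: periodicity of the field components along a₁, a₂ and a₃, encoded by the matrix J₃.) -/
open Real

lemma quasi_zmul {f : ℝ × ℝ × ℝ → ℂ} {κ a : ℝ × ℝ × ℝ}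
    (hf : QuasiPeriodic f κ a) (m : ℤ) (x : ℝ × ℝ × ℝ) :
    f (x.1 + (m : ℝ) * a.1, x.2.1 + (m : ℝ) * a.2.1, x.2.2 + (m : ℝ) * a.2.2)
      = Complex.exp (2 * (π : ℂ) * Complex.I * (((m : ℝ) * dot3 κ a : ℝ) : ℂ)) * f x := by
  induction m using Int.induction_on with
  | zero => simp
  | succ k ih =>
    have h := hf (x.1 + ((k : ℤ) : ℝ) * a.1, x.2.1 + ((k : ℤ) : ℝ) * a.2.1,
      x.2.2 + ((k : ℤ) : ℝ) * a.2.2)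
    dsimp only at h
    have e1 : x.1 + (((k : ℤ) + 1 : ℤ) : ℝ) * a.1 = x.1 + ((k : ℤ) : ℝ) * a.1 + a.1 := by
      push_cast; ring
    have e2 : x.2.1 + (((k : ℤ) + 1 : ℤ) : ℝ) * a.2.1
        = x.2.1 + ((k : ℤ) : ℝ) * a.2.1 + a.2.1 := by push_cast; ring
    have e3 : x.2.2 + (((k : ℤ) + 1 : ℤ) : ℝ) * a.2.2
        = x.2.2 + ((k : ℤ) : ℝ) * a.2.2 + a.2.2 := by push_cast; ring
    rw [e1, e2, e3, h, ih, ← mul_assoc, ← Complex.exp_add]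
    congr 1
    push_cast
    ring
  | pred k ih =>
    have h := hf (x.1 + ((-(k : ℤ) - 1 : ℤ) : ℝ) * a.1,
      x.2.1 + ((-(k : ℤ) - 1 : ℤ) : ℝ) * a.2.1, x.2.2 + ((-(k : ℤ) - 1 : ℤ) : ℝ) * a.2.2)
    dsimp only at h
    have e1 : x.1 + ((-(k : ℤ) - 1 : ℤ) : ℝ) * a.1 + a.1 = x.1 + ((-(k : ℤ) : ℤ) : ℝ) * a.1 := by
      push_cast; ring
    have e2 : x.2.1 + ((-(k : ℤ) - 1 : ℤ) : ℝ) * a.2.1 + a.2.1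
        = x.2.1 + ((-(k : ℤ) : ℤ) : ℝ) * a.2.1 := by push_cast; ring
    have e3 : x.2.2 + ((-(k : ℤ) - 1 : ℤ) : ℝ) * a.2.2 + a.2.2
        = x.2.2 + ((-(k : ℤ) : ℤ) : ℝ) * a.2.2 := by push_cast; ring
    rw [e1, e2, e3, ih] at h
    have hne : Complex.exp (2 * (π : ℂ) * Complex.I * ((dot3 κ a : ℝ) : ℂ)) ≠ 0 :=
      Complex.exp_ne_zero _
    apply mul_left_cancel₀ hne
    rw [← h, ← mul_assoc, ← Complex.exp_add]
    congr 1
    push_cast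
    ring

lemma myDivHelper {n q r : ℤ} (hn : 0 < n) (h0 : 0 ≤ r) (h1 : r < n) :
    (q * n + r) / n = q ∧ (q * n + r) % n = r := by
  constructor
  · rw [add_comm, Int.add_mul_ediv_right _ _ (ne_of_gt hn),
      Int.ediv_eq_zero_of_lt h0 h1, zero_add]
  · rw [add_comm, Int.add_mul_emod_self_right, Int.emod_eq_of_lt h0 h1]

/-- Theorem 3.3: periodicity of field components along `a₁`, `a₂` and `a₃`:
for `0 ≤ i < n₁`, `0 ≤ j < n₂` there are unique integers `p, q, i*, j*` with
`0 ≤ i* < n₁`, `0 ≤ j* < n₂`,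
`i = (m₂ − ρ₂n₁) + q(m₁ − ρ₁n₁) + p n₁ + i*`, `j = (m₃ − ρ₃n₂) + q n₂ + j*`, and
`f (iδx + c, jδy + d, n₃δz + z) = exp(2πι κ·(a₃ + q a₂ + p a₁)) f (i*δx + c, j*δy + d, z)`. -/
theorem stmt_2 (n₁ n₂ n₃ : ℕ) (hn₁ : 1 ≤ n₁) (hn₂ : 1 ≤ n₂) (hn₃ : 1 ≤ n₃)
    (m₁ m₂ m₃ : ℕ) (hm₁ : m₁ ≤ n₁) (hm₂ : m₂ ≤ n₁) (hm₃ : m₃ ≤ n₂)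
    (ρ₁ ρ₂ ρ₃ : ℕ) (hρ₁ : ρ₁ ≤ 1) (hρ₂ : ρ₂ ≤ 1) (hρ₃ : ρ₃ ≤ 1)
    (δx δy δz : ℝ) (hδx : 0 < δx) (hδy : 0 < δy) (hδz : 0 < δz) (κ : ℝ × ℝ × ℝ)
    (a₁ a₂ a₃ : ℝ × ℝ × ℝ)
    (ha₁ : a₁ = ((n₁ : ℝ) * δx, 0, 0))
    (ha₂ : a₂ = (((m₁ : ℝ) - (ρ₁ : ℝ) * n₁) * δx, (n₂ : ℝ) * δy, 0))
    (ha₃ : a₃ = (((m₂ : ℝ) - (ρ₂ : ℝ) * n₁) * δx, ((m₃ : ℝ) - (ρ₃ : ℝ) * n₂) * δy,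
      (n₃ : ℝ) * δz))
    (f : ℝ × ℝ × ℝ → ℂ)
    (hf₁ : QuasiPeriodic f κ a₁) (hf₂ : QuasiPeriodic f κ a₂)
    (hf₃ : QuasiPeriodic f κ a₃) :
    ∀ i j : ℕ, i < n₁ → j < n₂ →
      ∃! t : ℤ × ℤ × ℤ × ℤ,
        (0 ≤ t.2.2.1 ∧ t.2.2.1 < (n₁ : ℤ) ∧ 0 ≤ t.2.2.2 ∧ t.2.2.2 < (n₂ : ℤ) ∧
          (i : ℤ) = ((m₂ : ℤ) - (ρ₂ : ℤ) * n₁) + t.2.1 * ((m₁ : ℤ) - (ρ₁ : ℤ) * n₁)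
            + t.1 * n₁ + t.2.2.1 ∧
          (j : ℤ) = ((m₃ : ℤ) - (ρ₃ : ℤ) * n₂) + t.2.1 * n₂ + t.2.2.2) ∧
        ∀ c d z : ℝ,
          f ((i : ℝ) * δx + c, (j : ℝ) * δy + d, (n₃ : ℝ) * δz + z)
            = Complex.exp (2 * (π : ℂ) * Complex.I
                  * (dot3 κ (a₃ + (t.2.1 : ℝ) • a₂ + (t.1 : ℝ) • a₁) : ℝ))
                * f ((t.2.2.1 : ℝ) * δx + c, (t.2.2.2 : ℝ) * δy + d, z) := by
  intro i j hi hj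
  have hn₁' : (0 : ℤ) < n₁ := by exact_mod_cast hn₁
  have hn₂' : (0 : ℤ) < n₂ := by exact_mod_cast hn₂
  set A : ℤ := (m₃ : ℤ) - (ρ₃ : ℤ) * n₂ with hA
  set q : ℤ := ((j : ℤ) - A) / n₂ with hq
  set js : ℤ := ((j : ℤ) - A) % n₂ with hjs
  have hjs0 : 0 ≤ js := Int.emod_nonneg _ (ne_of_gt hn₂')
  have hjs1 : js < n₂ := Int.emod_lt_of_pos _ hn₂'
  have hjeq : (j : ℤ) = A + q * n₂ + js := by
    rw [hq, hjs]
    linarith [Int.mul_ediv_add_emod ((j : ℤ) - A) n₂]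
  set B : ℤ := (m₂ : ℤ) - (ρ₂ : ℤ) * n₁ + q * ((m₁ : ℤ) - (ρ₁ : ℤ) * n₁) with hB
  set p : ℤ := ((i : ℤ) - B) / n₁ with hp
  set is : ℤ := ((i : ℤ) - B) % n₁ with his
  have his0 : 0 ≤ is := Int.emod_nonneg _ (ne_of_gt hn₁')
  have his1 : is < n₁ := Int.emod_lt_of_pos _ hn₁'
  have hieq : (i : ℤ) = ((m₂ : ℤ) - (ρ₂ : ℤ) * n₁) + q * ((m₁ : ℤ) - (ρ₁ : ℤ) * n₁)
      + p * n₁ + is := by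
    rw [hp, his, hB]
    linarith [Int.mul_ediv_add_emod ((i : ℤ) - B) n₁]
  refine ⟨(p, q, is, js), ⟨⟨his0, his1, hjs0, hjs1, hieq, hjeq⟩, ?_⟩, ?_⟩
  · intro c d z
    subst ha₁ ha₂ ha₃
    have hi' := congrArg (fun t : ℤ => (t : ℝ)) hieq
    have hj' := congrArg (fun t : ℤ => (t : ℝ)) hjeq
    rw [hA] at hj'
    push_cast at hi' hj'
    have hd : dot3 κ ((((m₂ : ℝ) - (ρ₂ : ℝ) * n₁) * δx, ((m₃ : ℝ) - (ρ₃ : ℝ) * n₂) * δy,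
          (n₃ : ℝ) * δz) + (q : ℝ) • (((m₁ : ℝ) - (ρ₁ : ℝ) * n₁) * δx, (n₂ : ℝ) * δy, 0)
          + (p : ℝ) • ((n₁ : ℝ) * δx, 0, 0))
        = dot3 κ (((m₂ : ℝ) - (ρ₂ : ℝ) * n₁) * δx, ((m₃ : ℝ) - (ρ₃ : ℝ) * n₂) * δy,
            (n₃ : ℝ) * δz)
          + (q : ℝ) * dot3 κ (((m₁ : ℝ) - (ρ₁ : ℝ) * n₁) * δx, (n₂ : ℝ) * δy, 0)
          + (p : ℝ) * dot3 κ ((n₁ : ℝ) * δx, 0, 0) := by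
      simp [dot3, Prod.fst_add, Prod.snd_add, Prod.smul_fst, Prod.smul_snd, smul_eq_mul]
      ring
    have h1 := quasi_zmul hf₁ p (((is : ℝ) * δx + c, (js : ℝ) * δy + d, z))
    dsimp only at h1
    have h2 := quasi_zmul hf₂ q (((is : ℝ) * δx + c + (p : ℝ) * ((n₁ : ℝ) * δx),
        (js : ℝ) * δy + d + (p : ℝ) * 0, z + (p : ℝ) * 0))
    dsimp only at h2
    have h3 := hf₃ (((is : ℝ) * δx + c + (p : ℝ) * ((n₁ : ℝ) * δx)
          + (q : ℝ) * (((m₁ : ℝ) - (ρ₁ : ℝ) * n₁) * δx),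
        (js : ℝ) * δy + d + (p : ℝ) * 0 + (q : ℝ) * ((n₂ : ℝ) * δy),
        z + (p : ℝ) * 0 + (q : ℝ) * 0))
    dsimp only at h3
    have hx : ((i : ℝ) * δx + c, (j : ℝ) * δy + d, (n₃ : ℝ) * δz + z)
        = ((is : ℝ) * δx + c + (p : ℝ) * ((n₁ : ℝ) * δx)
              + (q : ℝ) * (((m₁ : ℝ) - (ρ₁ : ℝ) * n₁) * δx)
              + ((m₂ : ℝ) - (ρ₂ : ℝ) * n₁) * δx,
           (js : ℝ) * δy + d + (p : ℝ) * 0 + (q : ℝ) * ((n₂ : ℝ) * δy)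
              + ((m₃ : ℝ) - (ρ₃ : ℝ) * n₂) * δy,
           z + (p : ℝ) * 0 + (q : ℝ) * 0 + (n₃ : ℝ) * δz) := by
      refine Prod.ext ?_ (Prod.ext ?_ ?_)
      · dsimp only; rw [hi']; ring
      · dsimp only; rw [hj']; ring
      · dsimp only; ring
    rw [hx, h3, h2, h1, ← mul_assoc, ← mul_assoc, ← Complex.exp_add, ← Complex.exp_add, hd]
    congr 2
    push_cast
    ring
  · rintro ⟨p', q', is', js'⟩ ⟨⟨h0, h1, h2, h3, h4, h5⟩, -⟩
    dsimp only at h0 h1 h2 h3 h4 h5 ⊢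
    have hj2 : (j : ℤ) - A = q' * n₂ + js' := by rw [hA]; linarith
    have hqq : q' = q := by rw [hq, hj2]; exact (myDivHelper hn₂' h2 h3).1.symm
    have hjj : js' = js := by rw [hjs, hj2]; exact (myDivHelper hn₂' h2 h3).2.symm
    have hi2 : (i : ℤ) - B = p' * n₁ + is' := by rw [hB, ← hqq]; linarith
    have hpp : p' = p := by rw [hp, hi2]; exact (myDivHelper hn₁' h0 h1).1.symm
    have hii : is' = is := by rw [his, hi2]; exact (myDivHelper hn₁' h0 h1).2.symm
    simp [Prod.ext_iff, hqq, hjj, hpp, hii]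
end

section
/- Let n₁, n₂, n₃ ≥ 1 be integers and n := n₁n₂n₃. Let t ∈ ℝ, s : {1,…,n₁} → ℝ, and r : {1,…,n₁}×{1,…,n₂} → ℝ be arbitrary. For i ∈ {1,…,n₁}, j ∈ {1,…,n₂}, k ∈ {1,…,n₃} set θᵢ := 2πι(i+t)/n₁, θ_{i,j} := 2πι(j+s(i))/n₂, θ_{i,j,k} := 2πι(k+r(i,j))/n₃, and xᵢ := (e^{aθᵢ})_{a=0}^{n₁−1}, y_{i,j} := (e^{bθ_{i,j}})_{b=0}^{n₂−1}, z_{i,j,k} := (e^{cθ_{i,j,k}})_{c=0}^{n₃−1}. Then the n×n matrix T whose column indexed by (i,j,k) is n^{−1/2} · (z_{i,j,k} ⊗ y_{i,j} ⊗ xᵢ) is unitary, i.e. T*T = I_n. (Section 4.2: the assembled matrix T of common eigenvectors of the discrete partial derivative operators is unitary.) -/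
open Real Matrix

lemma comb_exp (m : ℕ) (a : ℕ) (x y : ℝ) :
    (starRingEnd ℂ) (Complex.exp ((a:ℂ) * (2 * (π:ℂ) * Complex.I * (x:ℂ) / (m:ℂ)))) *
      Complex.exp ((a:ℂ) * (2 * (π:ℂ) * Complex.I * (y:ℂ) / (m:ℂ))) =
    Complex.exp ((a:ℂ) * (2 * (π:ℂ) * Complex.I * (((y - x : ℝ)):ℂ) / (m:ℂ))) := by
  rw [← Complex.exp_conj, ← Complex.exp_add]
  congr 1
  have h : (starRingEnd ℂ) ((a:ℂ) * (2 * (π:ℂ) * Complex.I * (x:ℂ) / (m:ℂ)))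
      = (a:ℂ) * (2 * (π:ℂ) * (-Complex.I) * (x:ℂ) / (m:ℂ)) := by
    simp [_root_.map_mul, map_div₀, Complex.conj_I, map_ofNat]
  rw [h]
  push_cast
  ring

lemma sum_exp (m : ℕ) (hm : 0 < m) (d : ℤ) (hd : d.natAbs < m) :
    ∑ a : Fin m, Complex.exp ((a:ℂ) * (2 * (π:ℂ) * Complex.I * (d:ℂ) / (m:ℂ))) =
    if d = 0 then (m:ℂ) else 0 := by
  have hm' : (m : ℂ) ≠ 0 := Nat.cast_ne_zero.mpr hm.ne'
  split_ifs with h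
  · subst h; simp
  · have hw : ∀ a : Fin m,
        Complex.exp ((a:ℂ) * (2 * (π:ℂ) * Complex.I * (d:ℂ) / (m:ℂ)))
        = Complex.exp (2 * (π:ℂ) * Complex.I * (d:ℂ) / (m:ℂ)) ^ (a : ℕ) := by
      intro a; rw [← Complex.exp_nat_mul]
    simp only [hw]
    rw [Fin.sum_univ_eq_sum_range (fun a => Complex.exp (2 * (π:ℂ) * Complex.I * (d:ℂ) / (m:ℂ)) ^ a)]
    have hw1 : Complex.exp (2 * (π:ℂ) * Complex.I * (d:ℂ) / (m:ℂ)) ≠ 1 := by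
      intro h1
      rw [Complex.exp_eq_one_iff] at h1
      obtain ⟨n, hn⟩ := h1
      have hπ : (π:ℂ) ≠ 0 := Complex.ofReal_ne_zero.mpr Real.pi_ne_zero
      have hdc : (d:ℂ) = (n:ℂ) * (m:ℂ) := by
        field_simp at hn
        have h2 : (d:ℂ) * (2 * (π:ℂ) * Complex.I) = ((n:ℂ) * (m:ℂ)) * (2 * (π:ℂ) * Complex.I) := by
          linear_combination (2 * (π:ℂ) * Complex.I) * hn
        exact mul_right_cancel₀ (by simp [hπ, Complex.I_ne_zero]) h2
      have hdz : d = n * m := by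
        exact_mod_cast hdc
      have hn0 : n ≠ 0 := by rintro rfl; simp at hdz; exact h hdz
      have : m ≤ d.natAbs := by
        rw [hdz, Int.natAbs_mul, Int.natAbs_natCast]
        have h1n : 1 ≤ n.natAbs := by omega
        calc m = 1 * m := (one_mul m).symm
        _ ≤ n.natAbs * m := Nat.mul_le_mul_right m h1n
      omega
    rw [geom_sum_eq hw1]
    have hpow : Complex.exp (2 * (π:ℂ) * Complex.I * (d:ℂ) / (m:ℂ)) ^ m = 1 := by
      rw [← Complex.exp_nat_mul]
      have : (m:ℂ) * (2 * (π:ℂ) * Complex.I * (d:ℂ) / (m:ℂ)) = (d:ℂ) * (2 * (π:ℂ) * Complex.I) := by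
        field_simp
      rw [this, Complex.exp_int_mul_two_pi_mul_I]
    simp [hpow]

/-- Section 4.2: the assembled matrix `T` of common eigenvectors, whose column
indexed by `(i,j,k)` is `n^{−1/2} (z_{i,j,k} ⊗ y_{i,j} ⊗ xᵢ)` with
`xᵢ = (e^{aθᵢ})ₐ`, `θᵢ = 2πι(i+t)/n₁`, `y_{i,j} = (e^{bθ_{i,j}})_b`,
`θ_{i,j} = 2πι(j+s(i))/n₂`, `z_{i,j,k} = (e^{cθ_{i,j,k}})_c`,
`θ_{i,j,k} = 2πι(k+r(i,j))/n₃`, is unitary: `T*T = I`. -/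
theorem stmt_9 (n₁ n₂ n₃ : ℕ) (hn₁ : 1 ≤ n₁) (hn₂ : 1 ≤ n₂) (hn₃ : 1 ≤ n₃)
    (t : ℝ) (s : ℕ → ℝ) (r : ℕ → ℕ → ℝ)
    (T : Matrix (Fin n₃ × Fin n₂ × Fin n₁) (Fin n₁ × Fin n₂ × Fin n₃) ℂ)
    (hT : ∀ (p : Fin n₃ × Fin n₂ × Fin n₁) (q : Fin n₁ × Fin n₂ × Fin n₃),
      T p q = ((1 / Real.sqrt ((n₁ : ℝ) * n₂ * n₃) : ℝ) : ℂ)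
        * Complex.exp (((p.1 : ℕ) : ℂ)
            * (2 * (π : ℂ) * Complex.I
                * ((((q.2.2 : ℕ) + 1 + r ((q.1 : ℕ) + 1) ((q.2.1 : ℕ) + 1) : ℝ)) : ℂ)
                / (n₃ : ℂ)))
        * Complex.exp (((p.2.1 : ℕ) : ℂ)
            * (2 * (π : ℂ) * Complex.I
                * ((((q.2.1 : ℕ) + 1 + s ((q.1 : ℕ) + 1) : ℝ)) : ℂ)
                / (n₂ : ℂ)))
        * Complex.exp (((p.2.2 : ℕ) : ℂ)
            * (2 * (π : ℂ) * Complex.I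
                * ((((q.1 : ℕ) + 1 + t : ℝ)) : ℂ)
                / (n₁ : ℂ)))) :
    Tᴴ * T = 1 := by
  ext q q'
  obtain ⟨i, j, k⟩ := q
  obtain ⟨i', j', k'⟩ := q'
  set C : ℝ := 1 / Real.sqrt ((n₁ : ℝ) * n₂ * n₃) with hC
  set x₃ : ℝ := ((k : ℕ) + 1 + r ((i : ℕ) + 1) ((j : ℕ) + 1) : ℝ) with hx₃
  set x₃' : ℝ := ((k' : ℕ) + 1 + r ((i' : ℕ) + 1) ((j' : ℕ) + 1) : ℝ) with hx₃'
  set x₂ : ℝ := ((j : ℕ) + 1 + s ((i : ℕ) + 1) : ℝ) with hx₂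
  set x₂' : ℝ := ((j' : ℕ) + 1 + s ((i' : ℕ) + 1) : ℝ) with hx₂'
  set x₁ : ℝ := ((i : ℕ) + 1 + t : ℝ) with hx₁
  set x₁' : ℝ := ((i' : ℕ) + 1 + t : ℝ) with hx₁'
  have key : ∀ p : Fin n₃ × Fin n₂ × Fin n₁,
      (starRingEnd ℂ) (T p (i, j, k)) * T p (i', j', k') =
      ((C:ℂ) * (C:ℂ)) *
      (Complex.exp (((p.1 : ℕ):ℂ) * (2 * (π:ℂ) * Complex.I * (((x₃' - x₃ : ℝ)):ℂ) / (n₃:ℂ))) *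
       (Complex.exp (((p.2.1 : ℕ):ℂ) * (2 * (π:ℂ) * Complex.I * (((x₂' - x₂ : ℝ)):ℂ) / (n₂:ℂ))) *
        Complex.exp (((p.2.2 : ℕ):ℂ) * (2 * (π:ℂ) * Complex.I * (((x₁' - x₁ : ℝ)):ℂ) / (n₁:ℂ))))) := by
    intro p
    rw [hT, hT]
    rw [← comb_exp n₃ (p.1 : ℕ) x₃ x₃', ← comb_exp n₂ (p.2.1 : ℕ) x₂ x₂',
      ← comb_exp n₁ (p.2.2 : ℕ) x₁ x₁']
    simp only [_root_.map_mul, Complex.conj_ofReal]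
    ring
  rw [Matrix.mul_apply]
  simp only [Matrix.conjTranspose_apply, Complex.star_def, key]
  rw [← Finset.mul_sum]
  have factor : (∑ p : Fin n₃ × Fin n₂ × Fin n₁,
      (Complex.exp (((p.1 : ℕ):ℂ) * (2 * (π:ℂ) * Complex.I * (((x₃' - x₃ : ℝ)):ℂ) / (n₃:ℂ))) *
       (Complex.exp (((p.2.1 : ℕ):ℂ) * (2 * (π:ℂ) * Complex.I * (((x₂' - x₂ : ℝ)):ℂ) / (n₂:ℂ))) *
        Complex.exp (((p.2.2 : ℕ):ℂ) * (2 * (π:ℂ) * Complex.I * (((x₁' - x₁ : ℝ)):ℂ) / (n₁:ℂ)))))) =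
      (∑ c : Fin n₃, Complex.exp (((c : ℕ):ℂ) * (2 * (π:ℂ) * Complex.I * (((x₃' - x₃ : ℝ)):ℂ) / (n₃:ℂ)))) *
      ((∑ b : Fin n₂, Complex.exp (((b : ℕ):ℂ) * (2 * (π:ℂ) * Complex.I * (((x₂' - x₂ : ℝ)):ℂ) / (n₂:ℂ)))) *
       (∑ a : Fin n₁, Complex.exp (((a : ℕ):ℂ) * (2 * (π:ℂ) * Complex.I * (((x₁' - x₁ : ℝ)):ℂ) / (n₁:ℂ))))) := by
    rw [Fintype.sum_prod_type]
    simp only [Fintype.sum_prod_type, ← Finset.mul_sum, ← Finset.sum_mul]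
  rw [factor]
  by_cases hi : i = i'
  · subst hi
    have h1 : ((x₁' - x₁ : ℝ) : ℂ) = (((0 : ℤ)) : ℂ) := by
      rw [hx₁, hx₁']; push_cast; ring
    rw [h1, sum_exp n₁ hn₁ 0 (by simpa using (show 0 < n₁ by omega))]
    by_cases hj : j = j'
    · subst hj
      have h2 : ((x₂' - x₂ : ℝ) : ℂ) = (((0 : ℤ)) : ℂ) := by
        rw [hx₂, hx₂']; push_cast; ring
      rw [h2, sum_exp n₂ hn₂ 0 (by simpa using (show 0 < n₂ by omega))]
      have h3 : ((x₃' - x₃ : ℝ) : ℂ) = ((((k' : ℕ) : ℤ) - ((k : ℕ) : ℤ) : ℤ) : ℂ) := by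
        rw [hx₃, hx₃']; push_cast; ring
      rw [h3, sum_exp n₃ hn₃ _ (by
        have := k.isLt; have := k'.isLt
        omega)]
      by_cases hk : k = k'
      · subst hk
        simp only [sub_self, if_pos rfl, if_true, Matrix.one_apply_eq]
        have hN : (0:ℝ) < (n₁ : ℝ) * n₂ * n₃ := by positivity
        have hs : Real.sqrt ((n₁ : ℝ) * n₂ * n₃) * Real.sqrt ((n₁ : ℝ) * n₂ * n₃)
            = (n₁ : ℝ) * n₂ * n₃ := Real.mul_self_sqrt hN.le
        have hs0 : Real.sqrt ((n₁ : ℝ) * n₂ * n₃) ≠ 0 := by positivity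
        have hCC : ((C:ℝ):ℂ) * ((C:ℝ):ℂ) = 1 / (((n₁:ℝ) * n₂ * n₃ : ℝ) : ℂ) := by
          rw [← Complex.ofReal_mul, ← Complex.ofReal_one, ← Complex.ofReal_div]
          congr 1
          rw [hC, div_mul_div_comm, one_mul, hs]
        rw [hCC]
        have hN0 : (((n₁:ℝ) * n₂ * n₃ : ℝ) : ℂ) ≠ 0 := Complex.ofReal_ne_zero.mpr hN.ne'
        have h1' : (n₁:ℂ) ≠ 0 := Nat.cast_ne_zero.mpr (by omega)
        have h2' : (n₂:ℂ) ≠ 0 := Nat.cast_ne_zero.mpr (by omega)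
        have h3' : (n₃:ℂ) ≠ 0 := Nat.cast_ne_zero.mpr (by omega)
        field_simp
        push_cast
        ring
      · have hne : (((k' : ℕ) : ℤ) - ((k : ℕ) : ℤ) : ℤ) ≠ 0 := by
          intro h0
          apply hk
          exact Fin.ext (by omega)
        rw [if_neg hne]
        have : ¬ ((i, j, k) = (i, j, k')) := by
          simp [Prod.ext_iff]; exact hk
        rw [Matrix.one_apply_ne this]
        ring
    · have h2 : ((x₂' - x₂ : ℝ) : ℂ) = ((((j' : ℕ) : ℤ) - ((j : ℕ) : ℤ) : ℤ) : ℂ) := by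
        rw [hx₂, hx₂']; push_cast; ring
      rw [h2, sum_exp n₂ hn₂ _ (by
        have := j.isLt; have := j'.isLt
        omega)]
      have hne : (((j' : ℕ) : ℤ) - ((j : ℕ) : ℤ) : ℤ) ≠ 0 := by
        intro h0; apply hj; exact Fin.ext (by omega)
      rw [if_neg hne]
      have : ¬ ((i, j, k) = (i, j', k')) := by
        simp [Prod.ext_iff]; intro h; exact absurd h hj
      rw [Matrix.one_apply_ne this]
      ring
  · have h1 : ((x₁' - x₁ : ℝ) : ℂ) = ((((i' : ℕ) : ℤ) - ((i : ℕ) : ℤ) : ℤ) : ℂ) := by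
      rw [hx₁, hx₁']; push_cast; ring
    rw [h1, sum_exp n₁ hn₁ _ (by
      have := i.isLt; have := i'.isLt
      omega)]
    have hne : (((i' : ℕ) : ℤ) - ((i : ℕ) : ℤ) : ℤ) ≠ 0 := by
      intro h0; apply hi; exact Fin.ext (by omega)
    rw [if_neg hne]
    have : ¬ ((i, j, k) = (i', j', k')) := by
      simp [Prod.ext_iff]; intro h; exact absurd h hi
    rw [Matrix.one_apply_ne this]
    ring
end

section
/- Assume Λq is invertible (equivalently, all its diagonal entries are positive), and set Q₀ := (I₃ ⊗ T) · [Λ₁; Λ₂; Λ₃] · Λq^{−1/2} ∈ ℂ^{3n×n}, where [Λ₁; Λ₂; Λ₃] denotes the 3n×n vertically stacked matrix. Then: (i) Q₀*Q₀ = I_n; (ii) C·Q₀ = 0, hence C*C·Q₀ = 0; (iii) every x ∈ ℂ^{3n} with C*C·x = 0 equals Q₀·y for some y ∈ ℂ^n. That is, the columns of Q₀ form an orthonormal basis of the null space of C*C. (Section 5.1, construction of the null-space basis Q₀.) -/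
open Matrix Kronecker

/-- Vertically stacked `3n × n` matrix `[A; B; C]`. -/
def stack3 {n : ℕ} (A B C : Matrix (Fin n) (Fin n) ℂ) :
    Matrix (Fin 3 × Fin n) (Fin n) ℂ :=
  Matrix.of fun p t => if p.1 = 0 then A p.2 t else if p.1 = 1 then B p.2 t else C p.2 t

/-- The discrete curl operator `C = [[0, −C₃, C₂], [C₃, 0, −C₁], [−C₂, C₁, 0]]`. -/
def curlMat {n : ℕ} (C₁ C₂ C₃ : Matrix (Fin n) (Fin n) ℂ) :
    Matrix (Fin 3 × Fin n) (Fin 3 × Fin n) ℂ :=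
  Matrix.of fun p q =>
    if p.1 = 0 ∧ q.1 = 1 then -C₃ p.2 q.2
    else if p.1 = 0 ∧ q.1 = 2 then C₂ p.2 q.2
    else if p.1 = 1 ∧ q.1 = 0 then C₃ p.2 q.2
    else if p.1 = 1 ∧ q.1 = 2 then -C₁ p.2 q.2
    else if p.1 = 2 ∧ q.1 = 0 then -C₂ p.2 q.2
    else if p.1 = 2 ∧ q.1 = 1 then C₁ p.2 q.2
    else 0

/-- For a diagonal matrix `D` with positive real diagonal entries, the diagonal
matrix `D^{−1/2}` of reciprocal square roots of its entries. -/
noncomputable def invSqrtDiag {n : ℕ} (D : Matrix (Fin n) (Fin n) ℂ) :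
    Matrix (Fin n) (Fin n) ℂ :=
  Matrix.diagonal fun s => (((Real.sqrt ((D s s).re))⁻¹ : ℝ) : ℂ)

lemma stack3_herm_mul {n : ℕ} (A B C : Matrix (Fin n) (Fin n) ℂ) :
    (stack3 A B C)ᴴ * stack3 A B C = Aᴴ * A + Bᴴ * B + Cᴴ * C := by
  ext a b
  simp [Matrix.mul_apply, Matrix.conjTranspose_apply, Fintype.sum_prod_type,
    Fin.sum_univ_three, stack3]

set_option maxHeartbeats 2000000 in
/-- Section 5.1: with `Q₀ = (I₃ ⊗ T)[Λ₁; Λ₂; Λ₃]Λq^{−1/2}`, the columns of `Q₀`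
form an orthonormal basis of the null space of `C*C`. -/
theorem stmt_11 (n : ℕ) (hn : 1 ≤ n)
    (T Λ₁ Λ₂ Λ₃ C₁ C₂ C₃ : Matrix (Fin n) (Fin n) ℂ)
    (hT : Tᴴ * T = 1) (hT' : T * Tᴴ = 1)
    (hΛ₁ : Λ₁.IsDiag) (hΛ₂ : Λ₂.IsDiag) (hΛ₃ : Λ₃.IsDiag)
    (h₁ : C₁ * T = T * Λ₁) (h₂ : C₂ * T = T * Λ₂) (h₃ : C₃ * T = T * Λ₃)
    (Λq : Matrix (Fin n) (Fin n) ℂ)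
    (hΛq : Λq = Λ₁ᴴ * Λ₁ + Λ₂ᴴ * Λ₂ + Λ₃ᴴ * Λ₃)
    (hpos : ∀ s, 0 < (Λq s s).re)
    (Q₀ : Matrix (Fin 3 × Fin n) (Fin n) ℂ)
    (hQ₀ : Q₀ = ((1 : Matrix (Fin 3) (Fin 3) ℂ) ⊗ₖ T) * stack3 Λ₁ Λ₂ Λ₃ * invSqrtDiag Λq) :
    Q₀ᴴ * Q₀ = 1 ∧
    curlMat C₁ C₂ C₃ * Q₀ = 0 ∧
    (curlMat C₁ C₂ C₃)ᴴ * curlMat C₁ C₂ C₃ * Q₀ = 0 ∧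
    ∀ x : Fin 3 × Fin n → ℂ,
      ((curlMat C₁ C₂ C₃)ᴴ * curlMat C₁ C₂ C₃).mulVec x = 0 →
      ∃ y : Fin n → ℂ, Q₀.mulVec y = x := by
  obtain ⟨d₁, rfl⟩ : ∃ d, Λ₁ = Matrix.diagonal d := ⟨Λ₁.diag, (hΛ₁.diagonal_diag).symm⟩
  obtain ⟨d₂, rfl⟩ : ∃ d, Λ₂ = Matrix.diagonal d := ⟨Λ₂.diag, (hΛ₂.diagonal_diag).symm⟩
  obtain ⟨d₃, rfl⟩ : ∃ d, Λ₃ = Matrix.diagonal d := ⟨Λ₃.diag, (hΛ₃.diagonal_diag).symm⟩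
  obtain ⟨q, hqdef⟩ : ∃ q' : Fin n → ℝ, q' =
      fun s => Complex.normSq (d₁ s) + Complex.normSq (d₂ s) + Complex.normSq (d₃ s) :=
    ⟨_, rfl⟩
  -- Λq is a real positive diagonal matrix
  have hΛqd : Λq = diagonal (fun s => ((q s : ℝ) : ℂ)) := by
    rw [hΛq]
    simp only [diagonal_conjTranspose, diagonal_mul_diagonal, diagonal_add]
    congr 1
    funext s
    simp only [hqdef, Pi.star_apply, Complex.star_def, Complex.ofReal_add,
      Complex.normSq_eq_conj_mul_self]
  have hposq : ∀ s, 0 < q s := by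
    intro s
    have h := hpos s
    rw [hΛqd] at h
    simpa using h
  have hq0 : ∀ s, ((q s : ℝ) : ℂ) ≠ 0 := fun s => by exact_mod_cast (hposq s).ne'
  have hsq : ∀ s, Real.sqrt (q s) ≠ 0 := fun s => ne_of_gt (Real.sqrt_pos.2 (hposq s))
  have hqc : ∀ s, ((q s : ℝ) : ℂ)
      = (starRingEnd ℂ) (d₁ s) * d₁ s + (starRingEnd ℂ) (d₂ s) * d₂ s
        + (starRingEnd ℂ) (d₃ s) * d₃ s := by
    intro s
    simp only [hqdef, Complex.ofReal_add, Complex.normSq_eq_conj_mul_self]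
  -- the unitary factor
  have hUH : ((1 : Matrix (Fin 3) (Fin 3) ℂ) ⊗ₖ T)ᴴ = (1 : Matrix (Fin 3) (Fin 3) ℂ) ⊗ₖ Tᴴ := by
    ext p r
    by_cases h : p.1 = r.1
    · simp [conjTranspose_apply, kroneckerMap_apply, Matrix.one_apply, h]
    · simp only [conjTranspose_apply, kroneckerMap_apply, Matrix.one_apply, h,
        if_false]
      rw [if_neg (fun h' : r.1 = p.1 => h h'.symm)]
      simp
  have hUU : ((1 : Matrix (Fin 3) (Fin 3) ℂ) ⊗ₖ T)ᴴ * ((1 : Matrix (Fin 3) (Fin 3) ℂ) ⊗ₖ T)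
      = 1 := by
    rw [hUH, ← Matrix.mul_kronecker_mul, one_mul, hT, Matrix.one_kronecker_one]
  have hUU' : ((1 : Matrix (Fin 3) (Fin 3) ℂ) ⊗ₖ T) * ((1 : Matrix (Fin 3) (Fin 3) ℂ) ⊗ₖ T)ᴴ
      = 1 := by
    rw [hUH, ← Matrix.mul_kronecker_mul, one_mul, hT', Matrix.one_kronecker_one]
  -- the stacked factor
  have hSS' : (stack3 (diagonal d₁) (diagonal d₂) (diagonal d₃))ᴴ
      * stack3 (diagonal d₁) (diagonal d₂) (diagonal d₃) = diagonal (fun s => ((q s : ℝ) : ℂ)) := by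
    rw [stack3_herm_mul, ← hΛq, hΛqd]
  -- the inverse square root factor
  have hD : invSqrtDiag Λq = diagonal (fun s => (((Real.sqrt (q s))⁻¹ : ℝ) : ℂ)) := by
    unfold invSqrtDiag
    congr 1
    funext s
    rw [hΛqd]
    simp
  have hDH : (invSqrtDiag Λq)ᴴ = invSqrtDiag Λq := by
    rw [hD, diagonal_conjTranspose]
    ext a b
    by_cases hab : a = b <;> simp [diagonal_apply, hab, Complex.conj_ofReal]
  -- intertwining
  have hKU : curlMat C₁ C₂ C₃ * ((1 : Matrix (Fin 3) (Fin 3) ℂ) ⊗ₖ T)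
      = ((1 : Matrix (Fin 3) (Fin 3) ℂ) ⊗ₖ T)
        * curlMat (diagonal d₁) (diagonal d₂) (diagonal d₃) := by
    have e₁ : ∀ a b, ∑ u, C₁ a u * T u b = T a b * d₁ b := by
      intro a b
      have h := Matrix.ext_iff.2 h₁ a b
      simpa [Matrix.mul_apply, Matrix.diagonal_apply, mul_ite, mul_zero,
        Finset.sum_ite_eq'] using h
    have e₂ : ∀ a b, ∑ u, C₂ a u * T u b = T a b * d₂ b := by
      intro a b
      have h := Matrix.ext_iff.2 h₂ a b
      simpa [Matrix.mul_apply, Matrix.diagonal_apply, mul_ite, mul_zero,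
        Finset.sum_ite_eq'] using h
    have e₃ : ∀ a b, ∑ u, C₃ a u * T u b = T a b * d₃ b := by
      intro a b
      have h := Matrix.ext_iff.2 h₃ a b
      simpa [Matrix.mul_apply, Matrix.diagonal_apply, mul_ite, mul_zero,
        Finset.sum_ite_eq'] using h
    ext p r
    obtain ⟨i, s⟩ := p
    obtain ⟨j, t⟩ := r
    fin_cases i <;> fin_cases j <;>
      simp [mul_apply, curlMat, Matrix.one_apply, Fintype.sum_prod_type, Fin.sum_univ_three,
        kroneckerMap_apply, diagonal_apply, neg_mul, mul_neg, Finset.sum_neg_distrib,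
        mul_ite, ite_mul, Finset.sum_ite_eq, Finset.sum_ite_eq', e₁, e₂, e₃]
  have hKS : curlMat (diagonal d₁) (diagonal d₂) (diagonal d₃)
      * stack3 (diagonal d₁) (diagonal d₂) (diagonal d₃) = 0 := by
    ext p t
    obtain ⟨i, s⟩ := p
    fin_cases i <;>
      simp [mul_apply, curlMat, stack3, Fintype.sum_prod_type, Fin.sum_univ_three,
        diagonal_apply, neg_mul, mul_neg, Finset.sum_neg_distrib,
        mul_ite, ite_mul, Finset.sum_ite_eq, Finset.sum_ite_eq'] <;>
      split_ifs with h <;> first | (subst h; ring) | ring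
  -- (ii)
  have hCQ : curlMat C₁ C₂ C₃ * Q₀ = 0 := by
    rw [hQ₀, ← Matrix.mul_assoc, ← Matrix.mul_assoc, hKU,
      Matrix.mul_assoc ((1 : Matrix (Fin 3) (Fin 3) ℂ) ⊗ₖ T), hKS, Matrix.mul_zero,
      Matrix.zero_mul]
  have hCCQ : (curlMat C₁ C₂ C₃)ᴴ * curlMat C₁ C₂ C₃ * Q₀ = 0 := by
    rw [Matrix.mul_assoc, hCQ, Matrix.mul_zero]
  refine ⟨?_, hCQ, hCCQ, ?_⟩
  -- (i)
  · rw [hQ₀, Matrix.conjTranspose_mul, Matrix.conjTranspose_mul, hDH]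
    simp only [Matrix.mul_assoc]
    rw [← Matrix.mul_assoc (((1 : Matrix (Fin 3) (Fin 3) ℂ) ⊗ₖ T))ᴴ
      ((1 : Matrix (Fin 3) (Fin 3) ℂ) ⊗ₖ T), hUU, Matrix.one_mul,
      ← Matrix.mul_assoc (stack3 (diagonal d₁) (diagonal d₂) (diagonal d₃))ᴴ
      (stack3 (diagonal d₁) (diagonal d₂) (diagonal d₃)), hSS', hD,
      diagonal_mul_diagonal, diagonal_mul_diagonal]
    ext a b
    by_cases hab : a = b
    · subst hab
      simp only [diagonal_apply_eq, Matrix.one_apply_eq]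
      have hr : ((Real.sqrt (q a))⁻¹ * (q a * (Real.sqrt (q a))⁻¹) : ℝ) = 1 := by
        rw [← Real.mul_self_sqrt (hposq a).le]
        field_simp
        rw [Real.sqrt_sq (Real.sqrt_nonneg _)]
        exact div_self (pow_ne_zero 2 (hsq a))
      exact_mod_cast hr
    · simp [diagonal_apply, hab, Matrix.one_apply, hab]
  -- (iii)
  · intro x hx
    have hKx : curlMat C₁ C₂ C₃ *ᵥ x = 0 := by
      have h0 : star (curlMat C₁ C₂ C₃ *ᵥ x) ⬝ᵥ (curlMat C₁ C₂ C₃ *ᵥ x) = 0 := by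
        rw [Matrix.star_mulVec, ← Matrix.dotProduct_mulVec, Matrix.mulVec_mulVec, hx,
          dotProduct_zero]
      have h0r : ∑ i, Complex.normSq ((curlMat C₁ C₂ C₃ *ᵥ x) i) = 0 := by
        have hc : ((∑ i, Complex.normSq ((curlMat C₁ C₂ C₃ *ᵥ x) i) : ℝ) : ℂ) = 0 := by
          push_cast [Complex.normSq_eq_conj_mul_self]
          simpa [dotProduct, Pi.star_apply, Complex.star_def] using h0
        exact_mod_cast hc
      funext i
      have hi := (Finset.sum_eq_zero_iff_of_nonneg
        (fun i _ => Complex.normSq_nonneg _)).1 h0r i (Finset.mem_univ i)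
      simpa using Complex.normSq_eq_zero.mp hi
    obtain ⟨z, hzdef⟩ : ∃ z' : Fin 3 × Fin n → ℂ,
        z' = ((1 : Matrix (Fin 3) (Fin 3) ℂ) ⊗ₖ T)ᴴ *ᵥ x := ⟨_, rfl⟩
    have hxz : ((1 : Matrix (Fin 3) (Fin 3) ℂ) ⊗ₖ T) *ᵥ z = x := by
      rw [hzdef, Matrix.mulVec_mulVec, hUU', Matrix.one_mulVec]
    have hKz : curlMat (diagonal d₁) (diagonal d₂) (diagonal d₃) *ᵥ z = 0 := by
      have h1 : ((1 : Matrix (Fin 3) (Fin 3) ℂ) ⊗ₖ T)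
          *ᵥ (curlMat (diagonal d₁) (diagonal d₂) (diagonal d₃) *ᵥ z) = 0 := by
        rw [Matrix.mulVec_mulVec, ← hKU, ← Matrix.mulVec_mulVec, hxz, hKx]
      have h2 : ((1 : Matrix (Fin 3) (Fin 3) ℂ) ⊗ₖ T)ᴴ
          *ᵥ (((1 : Matrix (Fin 3) (Fin 3) ℂ) ⊗ₖ T)
            *ᵥ (curlMat (diagonal d₁) (diagonal d₂) (diagonal d₃) *ᵥ z)) = 0 := by
        rw [h1, Matrix.mulVec_zero]
      rwa [Matrix.mulVec_mulVec, hUU, Matrix.one_mulVec] at h2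
    -- scalar equations
    have e0 : ∀ s, -(d₃ s * z (1, s)) + d₂ s * z (2, s) = 0 := by
      intro s
      have h := congrFun hKz (0, s)
      simpa [curlMat, Matrix.mulVec, dotProduct, Fintype.sum_prod_type, Fin.sum_univ_three,
        diagonal_apply, neg_mul, mul_neg, Finset.sum_neg_distrib, mul_ite, ite_mul,
        Finset.sum_ite_eq, Finset.sum_ite_eq'] using h
    have e1 : ∀ s, d₃ s * z (0, s) + -(d₁ s * z (2, s)) = 0 := by
      intro s
      have h := congrFun hKz (1, s)
      simpa [curlMat, Matrix.mulVec, dotProduct, Fintype.sum_prod_type, Fin.sum_univ_three,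
        diagonal_apply, neg_mul, mul_neg, Finset.sum_neg_distrib, mul_ite, ite_mul,
        Finset.sum_ite_eq, Finset.sum_ite_eq'] using h
    have e2 : ∀ s, -(d₂ s * z (0, s)) + d₁ s * z (1, s) = 0 := by
      intro s
      have h := congrFun hKz (2, s)
      simpa [curlMat, Matrix.mulVec, dotProduct, Fintype.sum_prod_type, Fin.sum_univ_three,
        diagonal_apply, neg_mul, mul_neg, Finset.sum_neg_distrib, mul_ite, ite_mul,
        Finset.sum_ite_eq, Finset.sum_ite_eq'] using h
    have hz0 : ∀ s, z (0, s) * ((q s : ℝ) : ℂ)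
        = d₁ s * ((starRingEnd ℂ) (d₁ s) * z (0, s) + (starRingEnd ℂ) (d₂ s) * z (1, s)
          + (starRingEnd ℂ) (d₃ s) * z (2, s)) := by
      intro s
      rw [hqc s]
      linear_combination (starRingEnd ℂ) (d₃ s) * e1 s - (starRingEnd ℂ) (d₂ s) * e2 s
    have hz1 : ∀ s, z (1, s) * ((q s : ℝ) : ℂ)
        = d₂ s * ((starRingEnd ℂ) (d₁ s) * z (0, s) + (starRingEnd ℂ) (d₂ s) * z (1, s)
          + (starRingEnd ℂ) (d₃ s) * z (2, s)) := by
      intro s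
      rw [hqc s]
      linear_combination (starRingEnd ℂ) (d₁ s) * e2 s - (starRingEnd ℂ) (d₃ s) * e0 s
    have hz2 : ∀ s, z (2, s) * ((q s : ℝ) : ℂ)
        = d₃ s * ((starRingEnd ℂ) (d₁ s) * z (0, s) + (starRingEnd ℂ) (d₂ s) * z (1, s)
          + (starRingEnd ℂ) (d₃ s) * z (2, s)) := by
      intro s
      rw [hqc s]
      linear_combination (starRingEnd ℂ) (d₂ s) * e0 s - (starRingEnd ℂ) (d₁ s) * e1 s
    -- the preimage
    refine ⟨fun s => ((starRingEnd ℂ) (d₁ s) * z (0, s) + (starRingEnd ℂ) (d₂ s) * z (1, s)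
      + (starRingEnd ℂ) (d₃ s) * z (2, s)) / ((Real.sqrt (q s) : ℝ) : ℂ), ?_⟩
    have hqe : ∀ s, ((Λq s s).re : ℝ) = q s := by
      intro s
      rw [hΛqd]
      simp
    have key : stack3 (diagonal d₁) (diagonal d₂) (diagonal d₃) *ᵥ (invSqrtDiag Λq *ᵥ
        (fun s => ((starRingEnd ℂ) (d₁ s) * z (0, s) + (starRingEnd ℂ) (d₂ s) * z (1, s)
          + (starRingEnd ℂ) (d₃ s) * z (2, s)) / ((Real.sqrt (q s) : ℝ) : ℂ))) = z := by
      funext p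
      obtain ⟨k, s⟩ := p
      have hsqC : ((Real.sqrt (q s) : ℝ) : ℂ) ≠ 0 := by exact_mod_cast hsq s
      have hqq : ((q s : ℝ) : ℂ) = ((Real.sqrt (q s) : ℝ) : ℂ) * ((Real.sqrt (q s) : ℝ) : ℂ) := by
        rw [← Complex.ofReal_mul, Real.mul_self_sqrt (hposq s).le]
      fin_cases k
      · simp [invSqrtDiag, hqe, Matrix.mulVec, dotProduct, stack3,
          diagonal_apply, ite_mul, zero_mul, Finset.sum_ite_eq]
        field_simp
        first
        | linear_combination hz0 s + z (0, s) * hqq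
        | linear_combination hz0 s - z (0, s) * hqq
        | linear_combination -hz0 s + z (0, s) * hqq
        | linear_combination -hz0 s - z (0, s) * hqq
      · simp [invSqrtDiag, hqe, Matrix.mulVec, dotProduct, stack3,
          diagonal_apply, ite_mul, zero_mul, Finset.sum_ite_eq]
        field_simp
        first
        | linear_combination hz1 s + z (1, s) * hqq
        | linear_combination hz1 s - z (1, s) * hqq
        | linear_combination -hz1 s + z (1, s) * hqq
        | linear_combination -hz1 s - z (1, s) * hqq
      · simp [invSqrtDiag, hqe, Matrix.mulVec, dotProduct, stack3,
          diagonal_apply, ite_mul, zero_mul, Finset.sum_ite_eq]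
        field_simp
        first
        | linear_combination hz2 s + z (2, s) * hqq
        | linear_combination hz2 s - z (2, s) * hqq
        | linear_combination -hz2 s + z (2, s) * hqq
        | linear_combination -hz2 s - z (2, s) * hqq
    rw [hQ₀, ← Matrix.mulVec_mulVec, ← Matrix.mulVec_mulVec, key, hxz]
end

section
/- Set Π̃₁ := [Λq − Λ₁Λs*; Λq − Λ₂Λs*; Λq − Λ₃Λs*] ∈ ℂ^{3n×n} (vertically stacked) and Q̃₁ := (I₃ ⊗ T) Π̃₁. Then: (i) C*C · Q̃₁ = Q̃₁ · Λq; (ii) Q̃₁*Q̃₁ = (3Λq − Λp)Λq; (iii) Q̃₁* · (I₃ ⊗ T)[Λ₁; Λ₂; Λ₃] = 0, i.e. the columns of Q̃₁ are orthogonal to the null-space basis of C*C. (Section 5.1, the first family Q₁ of range-space vectors of C*C.) -/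
open Matrix Kronecker

section helpers

variable {n : ℕ}

lemma stack3_mul (A B C D : Matrix (Fin n) (Fin n) ℂ) :
    stack3 A B C * D = stack3 (A*D) (B*D) (C*D) := by
  ext ⟨i,k⟩ j
  fin_cases i <;> simp [stack3, mul_apply]

lemma kron_mul_stack3 (T A B C : Matrix (Fin n) (Fin n) ℂ) :
    ((1 : Matrix (Fin 3) (Fin 3) ℂ) ⊗ₖ T) * stack3 A B C = stack3 (T*A) (T*B) (T*C) := by
  ext ⟨i,k⟩ j
  fin_cases i <;>
    simp [stack3, mul_apply, Fintype.sum_prod_type, Fin.sum_univ_three, one_apply,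
      kroneckerMap_apply]

lemma curl_mul_stack3 (C₁ C₂ C₃ A B C : Matrix (Fin n) (Fin n) ℂ) :
    curlMat C₁ C₂ C₃ * stack3 A B C =
      stack3 (-(C₃*B) + C₂*C) (C₃*A - C₁*C) (-(C₂*A) + C₁*B) := by
  ext ⟨i,k⟩ j
  fin_cases i <;>
    simp [stack3, curlMat, mul_apply, Fintype.sum_prod_type, Fin.sum_univ_three,
      Finset.sum_add_distrib, Finset.sum_neg_distrib, sub_eq_add_neg]

lemma curl_conjT (C₁ C₂ C₃ : Matrix (Fin n) (Fin n) ℂ) :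
    (curlMat C₁ C₂ C₃)ᴴ = curlMat (-C₁ᴴ) (-C₂ᴴ) (-C₃ᴴ) := by
  ext ⟨i,k⟩ ⟨i',m⟩
  fin_cases i <;> fin_cases i' <;> simp [curlMat, conjTranspose_apply]

lemma stack3_conjT_mul (A B C D E F : Matrix (Fin n) (Fin n) ℂ) :
    (stack3 A B C)ᴴ * stack3 D E F = Aᴴ*D + Bᴴ*E + Cᴴ*F := by
  ext i j
  simp [mul_apply, stack3, conjTranspose_apply, Fintype.sum_prod_type, Fin.sum_univ_three,
    Finset.sum_add_distrib]

lemma stack3_congr {A B C A' B' C' : Matrix (Fin n) (Fin n) ℂ}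
    (hA : A = A') (hB : B = B') (hC : C = C') :
    stack3 A B C = stack3 A' B' C' := by rw [hA, hB, hC]

lemma conj_eig {T Λ C : Matrix (Fin n) (Fin n) ℂ} (hT : Tᴴ * T = 1) (hT' : T * Tᴴ = 1)
    (h : C * T = T * Λ) : Cᴴ * T = T * Λᴴ := by
  have hC : C = T * Λ * Tᴴ := by
    calc C = C * (T * Tᴴ) := by rw [hT', mul_one]
    _ = (C * T) * Tᴴ := by rw [Matrix.mul_assoc]
    _ = T * Λ * Tᴴ := by rw [h]
  rw [hC]
  simp [conjTranspose_mul, Matrix.mul_assoc, hT]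

lemma curl_pull {T Λ₁ Λ₂ Λ₃ C₁ C₂ C₃ : Matrix (Fin n) (Fin n) ℂ}
    (h₁ : C₁ * T = T * Λ₁) (h₂ : C₂ * T = T * Λ₂) (h₃ : C₃ * T = T * Λ₃)
    (X₁ X₂ X₃ : Matrix (Fin n) (Fin n) ℂ) :
    curlMat C₁ C₂ C₃ * stack3 (T*X₁) (T*X₂) (T*X₃) =
      stack3 (T*(-(Λ₃*X₂) + Λ₂*X₃)) (T*(Λ₃*X₁ - Λ₁*X₃)) (T*(-(Λ₂*X₁) + Λ₁*X₂)) := by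
  rw [curl_mul_stack3]
  simp only [Matrix.mul_add, Matrix.mul_sub, Matrix.mul_neg, ← Matrix.mul_assoc, h₁, h₂, h₃]

end helpers

/-- Section 5.1: properties of the first family `Q̃₁ = (I₃ ⊗ T) Π̃₁` of
range-space vectors of `C*C`, with `Π̃₁ = [Λq − Λ₁Λs*; Λq − Λ₂Λs*; Λq − Λ₃Λs*]`. -/
theorem stmt_13 (n : ℕ) (hn : 1 ≤ n)
    (T Λ₁ Λ₂ Λ₃ C₁ C₂ C₃ : Matrix (Fin n) (Fin n) ℂ)
    (hT : Tᴴ * T = 1) (hT' : T * Tᴴ = 1)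
    (hΛ₁ : Λ₁.IsDiag) (hΛ₂ : Λ₂.IsDiag) (hΛ₃ : Λ₃.IsDiag)
    (h₁ : C₁ * T = T * Λ₁) (h₂ : C₂ * T = T * Λ₂) (h₃ : C₃ * T = T * Λ₃)
    (Λq Λs Λp : Matrix (Fin n) (Fin n) ℂ)
    (hΛq : Λq = Λ₁ᴴ * Λ₁ + Λ₂ᴴ * Λ₂ + Λ₃ᴴ * Λ₃)
    (hΛs : Λs = Λ₁ + Λ₂ + Λ₃)
    (hΛp : Λp = Λs * Λsᴴ)
    (Q₁ : Matrix (Fin 3 × Fin n) (Fin n) ℂ)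
    (hQ₁ : Q₁ = ((1 : Matrix (Fin 3) (Fin 3) ℂ) ⊗ₖ T)
      * stack3 (Λq - Λ₁ * Λsᴴ) (Λq - Λ₂ * Λsᴴ) (Λq - Λ₃ * Λsᴴ)) :
    (curlMat C₁ C₂ C₃)ᴴ * curlMat C₁ C₂ C₃ * Q₁ = Q₁ * Λq ∧
    Q₁ᴴ * Q₁ = ((3 : ℂ) • Λq - Λp) * Λq ∧
    Q₁ᴴ * (((1 : Matrix (Fin 3) (Fin 3) ℂ) ⊗ₖ T) * stack3 Λ₁ Λ₂ Λ₃) = 0 := by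
  have e₁ : (-C₁ᴴ) * T = T * (-Λ₁ᴴ) := by
    rw [Matrix.neg_mul, conj_eig hT hT' h₁, Matrix.mul_neg]
  have e₂ : (-C₂ᴴ) * T = T * (-Λ₂ᴴ) := by
    rw [Matrix.neg_mul, conj_eig hT hT' h₂, Matrix.mul_neg]
  have e₃ : (-C₃ᴴ) * T = T * (-Λ₃ᴴ) := by
    rw [Matrix.neg_mul, conj_eig hT hT' h₃, Matrix.mul_neg]
  subst hΛq hΛs hΛp hQ₁
  obtain ⟨d₁, rfl⟩ : ∃ d, Λ₁ = diagonal d := ⟨Λ₁.diag, hΛ₁.diagonal_diag.symm⟩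
  obtain ⟨d₂, rfl⟩ : ∃ d, Λ₂ = diagonal d := ⟨Λ₂.diag, hΛ₂.diagonal_diag.symm⟩
  obtain ⟨d₃, rfl⟩ : ∃ d, Λ₃ = diagonal d := ⟨Λ₃.diag, hΛ₃.diagonal_diag.symm⟩
  rw [kron_mul_stack3]
  have cancel : ∀ A B : Matrix (Fin n) (Fin n) ℂ, (T*A)ᴴ*(T*B) = Aᴴ*B := by
    intro A B
    rw [conjTranspose_mul, Matrix.mul_assoc, ← Matrix.mul_assoc Tᴴ, hT, Matrix.one_mul]
  refine ⟨?_, ?_, ?_⟩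
  · rw [Matrix.mul_assoc, curl_pull h₁ h₂ h₃, curl_conjT, curl_pull e₁ e₂ e₃, stack3_mul]
    simp only [Matrix.mul_assoc]
    refine stack3_congr ?_ ?_ ?_ <;>
    · congr 1
      simp only [conjTranspose_add, conjTranspose_sub, conjTranspose_mul, conjTranspose_neg,
        conjTranspose_conjTranspose, diagonal_conjTranspose,
        Matrix.neg_mul, Matrix.mul_neg, Matrix.add_mul, Matrix.sub_mul, Matrix.mul_add,
        Matrix.mul_sub, diagonal_mul_diagonal, diagonal_add, diagonal_sub, diagonal_neg]
      ext i j
      by_cases h : i = j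
      · subst h; simp [diagonal_apply_eq]; ring
      · simp [diagonal_apply_ne _ h]
  · rw [stack3_conjT_mul]
    simp only [cancel]
    simp only [conjTranspose_add, conjTranspose_sub, conjTranspose_mul, conjTranspose_neg,
      conjTranspose_conjTranspose, diagonal_conjTranspose, smul_mul_assoc,
      Matrix.neg_mul, Matrix.mul_neg, Matrix.add_mul, Matrix.sub_mul, Matrix.mul_add,
      Matrix.mul_sub, diagonal_mul_diagonal, diagonal_add, diagonal_sub, diagonal_neg,
      ← diagonal_smul]
    ext i j
    by_cases h : i = j
    · subst h; simp [diagonal_apply_eq]; ring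
    · simp [diagonal_apply_ne _ h]
  · rw [kron_mul_stack3, stack3_conjT_mul]
    simp only [cancel]
    simp only [conjTranspose_add, conjTranspose_sub, conjTranspose_mul,
      conjTranspose_conjTranspose, diagonal_conjTranspose,
      Matrix.add_mul, Matrix.sub_mul, Matrix.mul_add, Matrix.mul_sub,
      diagonal_mul_diagonal, diagonal_add, diagonal_sub]
    ext i j
    by_cases h : i = j
    · subst h; simp [diagonal_apply_eq]; ring
    · simp [diagonal_apply_ne _ h]
end
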